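/- Every infinite virtually cyclic group is of type I or of type II; that is, every infinite group containing a cyclic subgroup of finite index admits a surjective group homomorphism onto the infinite cyclic group ℤ or a surjective group homomorphism onto the infinite dihedral group D∞. -/

import Mathlib

open Subgroup Function DihedralGroup

section Aux

open Subgroup Function

/-- An infinite cyclic group is isomorphic to `Multiplicative ℤ`. -/
lemma aux_infCyclicIso (G : Type*) [Group G] [IsCyclic G] [Infinite G] :
    Nonempty (G ≃* Multiplicative ℤ) := by
  obtain ⟨g, hg⟩ := IsCyclic.exists_generator (α := G)
  have hfin : ¬IsOfFinOrder g := by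
    intro h
    have h1 : (Subgroup.zpowers g : Set G).Finite := by
      simpa using h.finite_zpowers
    have h2 : (Subgroup.zpowers g : Set G) = Set.univ := by
      ext x; simp [hg x]
    rw [h2] at h1
    exact Set.infinite_univ h1
  have hinj : Injective (zpowersHom G g) := by
    have : Injective fun n : ℤ => g ^ n := injective_zpow_iff_not_isOfFinOrder.2 hfin
    intro a b hab
    exact Multiplicative.toAdd.injective (this hab)
  have hsurj : Surjective (zpowersHom G g) := by
    intro x
    obtain ⟨k, hk⟩ := hg x
    exact ⟨Multiplicative.ofAdd k, hk⟩
  exact ⟨(MulEquiv.ofBijective (zpowersHom G g) ⟨hinj, hsurj⟩).symm⟩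

lemma aux_multZ_isOfFinOrder {y : Multiplicative ℤ} (h : IsOfFinOrder y) : y = 1 := by
  obtain ⟨n, hn, hy⟩ := isOfFinOrder_iff_pow_eq_one.1 h
  have : (n : ℤ) * Multiplicative.toAdd y = 0 := by
    have := congrArg Multiplicative.toAdd hy
    simpa [toAdd_pow, mul_comm] using this
  have hn' : (n : ℤ) ≠ 0 := by exact_mod_cast hn.ne'
  have := mul_eq_zero.1 this
  rcases this with h | h
  · exact absurd h hn'
  · exact Multiplicative.toAdd.injective (by simpa using h)

/-- A group with a homomorphism to `ℤ` having nontrivial image is of "type I". -/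
lemma aux_typeI {V : Type*} [Group V] (f : V →* Multiplicative ℤ) (v : V) (hv : f v ≠ 1) :
    ∃ F : V →* Multiplicative ℤ, Surjective F := by
  have hfin : ¬IsOfFinOrder (f v) := fun h => hv (aux_multZ_isOfFinOrder h)
  have hinf : Infinite f.range := by
    have : ((f.range : Set (Multiplicative ℤ))).Infinite := by
      refine Set.Infinite.mono ?_ ((infinite_zpowers).2 hfin)
      rintro x ⟨k, rfl⟩
      exact ⟨v ^ k, by simp⟩
    exact this.to_subtype
  obtain ⟨e⟩ := aux_infCyclicIso f.range
  exact ⟨e.toMonoidHom.comp f.rangeRestrict, e.surjective.comp f.rangeRestrict_surjective⟩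

open DihedralGroup

instance : IsDomain (ZMod 0) := inferInstanceAs (IsDomain ℤ)

/-- The endomorphism of `D∞` multiplying all indices by `b`. -/
def aux_dmul (b : ZMod 0) : DihedralGroup 0 →* DihedralGroup 0 where
  toFun := fun x => match x with
    | r i => r (i * b)
    | sr i => sr (i * b)
  map_one' := by
    show r (0 * b) = r 0
    rw [zero_mul]
  map_mul' := by
    rintro (i | i) (j | j) <;>
      simp only [r_mul_r, r_mul_sr, sr_mul_r, sr_mul_sr] <;> congr 1 <;> ring

lemma aux_dmul_r (b i : ZMod 0) : aux_dmul b (r i) = r (i * b) := rfl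

lemma aux_dmul_sr (b i : ZMod 0) : aux_dmul b (sr i) = sr (i * b) := rfl

lemma aux_dmul_inj {b : ZMod 0} (hb : b ≠ 0) : Function.Injective (aux_dmul b) := by
  rintro (i | i) (j | j) h <;>
    simp only [aux_dmul, MonoidHom.coe_mk, OneHom.coe_mk, r.injEq, sr.injEq,
      reduceCtorEq] at h
  · exact congrArg _ (mul_right_cancel₀ hb h)
  · exact congrArg _ (mul_right_cancel₀ hb h)
end Aux

/-- A group is virtually cyclic if it contains a cyclic subgroup of finite index. -/
def VirtuallyCyclic (G : Type*) [Group G] : Prop :=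
  ∃ H : Subgroup G, IsCyclic ↥H ∧ H.FiniteIndex

/-- An infinite virtually cyclic group is of type I if it admits a surjective
homomorphism onto the infinite cyclic group ℤ. -/
def IsTypeI (G : Type*) [Group G] : Prop :=
  ∃ f : G →* Multiplicative ℤ, Function.Surjective f

/-- An infinite virtually cyclic group is of type II if it admits a surjective
homomorphism onto the infinite dihedral group D∞. -/
def IsTypeII (G : Type*) [Group G] : Prop :=
  ∃ f : G →* DihedralGroup 0, Function.Surjective f

/-- Every infinite virtually cyclic group is of type I or of type II. -/
theorem typeI_or_typeII (V : Type*) [Group V] [Infinite V] (hV : VirtuallyCyclic V) :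
    IsTypeI V ∨ IsTypeII V := by
  classical
  obtain ⟨H, hHc, hHf⟩ := hV
  haveI := hHf
  -- every finite index subgroup is infinite
  have keyInf : ∀ K : Subgroup V, K.FiniteIndex → Infinite ↥K := by
    intro K hK
    by_contra hfin
    rw [not_infinite_iff_finite] at hfin
    haveI := hfin
    haveI := hK
    haveI : Finite (V ⧸ K) := K.finite_quotient_of_finiteIndex
    haveI : Finite V := Finite.of_equiv _ (Subgroup.groupEquivQuotientProdSubgroup (s := K)).symm
    exact not_finite V
  haveI hHinf : Infinite ↥H := keyInf H hHf
  haveI hHcyc := hHc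
  set N₀ := H.normalCore with hN₀def
  haveI hN₀n : N₀.Normal := H.normalCore_normal
  haveI hN₀f : N₀.FiniteIndex := H.finiteIndex_normalCore
  haveI hN₀inf : Infinite ↥N₀ := keyInf N₀ hN₀f
  haveI hN₀cyc : IsCyclic ↥N₀ :=
    isCyclic_of_surjective (Subgroup.subgroupOfEquivOfLe H.normalCore_le).toMonoidHom
      (Subgroup.subgroupOfEquivOfLe H.normalCore_le).surjective
  obtain ⟨⟨g, hgN⟩, hgen⟩ := IsCyclic.exists_generator (α := ↥N₀)
  have hmemN : ∀ x ∈ N₀, ∃ k : ℤ, x = g ^ k := by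
    intro x hx
    obtain ⟨k, hk⟩ := hgen ⟨x, hx⟩
    refine ⟨k, ?_⟩
    have := congrArg Subtype.val hk
    simpa using this.symm
  have hford : ¬IsOfFinOrder g := by
    intro h
    have h2 : (N₀ : Set V) ⊆ (Subgroup.zpowers g : Set V) := by
      intro x hx
      obtain ⟨k, rfl⟩ := hmemN x hx
      exact ⟨k, rfl⟩
    have h1 : ((N₀ : Set V)).Finite := Set.Finite.subset h.finite_zpowers h2
    haveI := h1.to_subtype
    exact not_finite ↥N₀
  have hinj : Injective fun n : ℤ => g ^ n := injective_zpow_iff_not_isOfFinOrder.2 hford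
  have hgpow : ∀ m : ℕ, g ^ m = 1 → m = 0 := by
    intro m hm
    have := orderOf_eq_zero_iff.2 hford
    have h2 := orderOf_dvd_of_pow_eq_one hm
    rw [this] at h2
    exact Nat.eq_zero_of_zero_dvd h2
  -- the conjugation dichotomy
  have key : ∀ v : V, v * g * v⁻¹ = g ∨ v * g * v⁻¹ = g⁻¹ := by
    intro v
    have h1 : v * g * v⁻¹ ∈ N₀ := hN₀n.conj_mem g hgN v
    obtain ⟨a, ha⟩ := hmemN _ h1
    have h2 : v⁻¹ * g * v ∈ N₀ := by simpa using hN₀n.conj_mem g hgN v⁻¹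
    obtain ⟨b, hb⟩ := hmemN _ h2
    have hab : (fun n : ℤ => g ^ n) (b * a) = (fun n : ℤ => g ^ n) 1 := by
      simp only [zpow_one]
      calc g ^ (b * a) = (g ^ b) ^ a := zpow_mul g b a
        _ = (v⁻¹ * g * v) ^ a := by rw [← hb]
        _ = v⁻¹ * g ^ a * v := by
              have h3 := conj_zpow (i := a) (a := v⁻¹) (b := g)
              rw [inv_inv] at h3
              rw [h3]
        _ = v⁻¹ * (v * g * v⁻¹) * v := by rw [← ha]
        _ = g := by group
    have hab' : b * a = 1 := hinj hab
    rcases Int.eq_one_or_neg_one_of_mul_eq_one' hab' with ⟨_, ha1⟩ | ⟨_, ha1⟩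
    · left; rw [ha, ha1, zpow_one]
    · right; rw [ha, ha1, zpow_neg, zpow_one]
  obtain ⟨e⟩ := aux_infCyclicIso ↥N₀
  by_cases hall : ∀ v : V, v * g * v⁻¹ = g
  -- Case A : g is central, use the transfer homomorphism V →* ℤ
  · left
    have hkey : ∀ (k : ℕ) (g₀ : V), g₀⁻¹ * g ^ k * g₀ ∈ N₀ → g₀⁻¹ * g ^ k * g₀ = g ^ k := by
      intro k g₀ _
      have hcomm : Commute g₀ g := by
        have h5 := hall g₀
        rw [mul_inv_eq_iff_eq_mul] at h5
        exact h5
      have h6 := (hcomm.pow_right k).eq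
      rw [mul_assoc, ← h6, inv_mul_cancel_left]
    set T := MonoidHom.transfer e.toMonoidHom with hT
    have hTg : T g = e ⟨g ^ N₀.index, MonoidHom.transfer_eq_pow_aux g hkey⟩ :=
      MonoidHom.transfer_eq_pow e.toMonoidHom g hkey
    obtain ⟨F, hF⟩ := aux_typeI T g (by
      rw [hTg]
      intro hcon
      have h6 : (⟨g ^ N₀.index, MonoidHom.transfer_eq_pow_aux g hkey⟩ : ↥N₀) = 1 :=
        e.injective (by simpa using hcon)
      have h7 : g ^ N₀.index = 1 := congrArg Subtype.val h6
      exact hN₀f.index_ne_zero (hgpow _ h7))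
    exact ⟨F, hF⟩
  -- Case B : some element inverts g; build a surjection onto D∞
  · right
    push_neg at hall
    obtain ⟨t, htne⟩ := hall
    have ht : t * g * t⁻¹ = g⁻¹ := (key t).resolve_left htne
    set W := Subgroup.centralizer ({g} : Set V) with hWdef
    have hmemW : ∀ v : V, v ∈ W ↔ v * g = g * v := fun v =>
      Subgroup.mem_centralizer_singleton_iff
    have hgW : g ∈ W := (hmemW g).2 rfl
    have hNW : N₀ ≤ W := by
      intro x hx
      obtain ⟨k, rfl⟩ := hmemN x hx
      exact (hmemW _).2 ((Commute.refl g).zpow_left k).eq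
    have hgne : g⁻¹ ≠ g := by
      intro hcon
      have h5 := hinj (show (fun n : ℤ => g ^ n) (-1) = (fun n : ℤ => g ^ n) 1 by
        simp only [zpow_neg, zpow_one]; exact hcon)
      norm_num at h5
    have hmemW' : ∀ v : V, v ∈ W ↔ v * g * v⁻¹ = g := by
      intro v; rw [hmemW, mul_inv_eq_iff_eq_mul]
    have hnot : ∀ v : V, v ∉ W → v * g * v⁻¹ = g⁻¹ := fun v hv =>
      (key v).resolve_left fun hmm => hv ((hmemW' v).2 hmm)
    have htW : t ∉ W := by
      intro hc
      exact hgne (ht ▸ (hmemW' t).1 hc)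
    have hconjmul : ∀ u v : V, (u * v) * g * (u * v)⁻¹ = u * (v * g * v⁻¹) * u⁻¹ := by
      intro u v; group
    have hconjinv : ∀ u : V, u * g⁻¹ * u⁻¹ = (u * g * u⁻¹)⁻¹ := by
      intro u; group
    have fact2 : ∀ u v : V, u ∉ W → v ∉ W → u * v ∈ W := by
      intro u v hu hv
      refine (hmemW' _).2 ?_
      rw [hconjmul, hnot v hv, hconjinv, hnot u hu, inv_inv]
    have fact3 : ∀ u v : V, u ∈ W → v ∉ W → u * v ∉ W := fun u v hu hv hc =>
      hv ((Subgroup.mul_mem_cancel_left W hu).1 hc)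
    have fact4 : ∀ u v : V, u ∉ W → v ∈ W → u * v ∉ W := fun u v hu hv hc =>
      hu ((Subgroup.mul_mem_cancel_right W hv).1 hc)
    have htinv : t⁻¹ ∉ W := fun hc => htW ((Subgroup.inv_mem_iff W).1 hc)
    have hcompl : ∀ v : V, v ∉ W → v * t⁻¹ ∈ W := fun v hv => fact2 v t⁻¹ hv htinv
    have ht'' : t * g⁻¹ * t⁻¹ = g := by rw [hconjinv, ht, inv_inv]
    have ht' : t⁻¹ * g * t = g⁻¹ := by
      have h1 : t * g = g⁻¹ * t := by
        rw [← ht]; group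
      have h2 : g⁻¹ * t⁻¹ = t⁻¹ * g := by
        have h3 := congrArg Inv.inv h1
        simpa [mul_inv_rev] using h3
      rw [← h2, mul_assoc, inv_mul_cancel, mul_one]
    -- the conjugation-by-t automorphism of W
    have hcmem : ∀ w : ↥W, t * (w : V) * t⁻¹ ∈ W := by
      intro w
      have hcw : Commute (w : V) g := (hmemW _).1 w.2
      refine (hmemW _).2 ?_
      calc t * w * t⁻¹ * g = t * ((w : V) * (t⁻¹ * g * t)) * t⁻¹ := by group
        _ = t * ((w : V) * g⁻¹) * t⁻¹ := by rw [ht']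
        _ = t * (g⁻¹ * w) * t⁻¹ := by rw [hcw.inv_right.eq]
        _ = (t * g⁻¹ * t⁻¹) * (t * w * t⁻¹) := by group
        _ = g * (t * w * t⁻¹) := by rw [ht'']
    let c : ↥W →* ↥W := MonoidHom.mk' (fun w => ⟨t * (w : V) * t⁻¹, hcmem w⟩) (by
      intro a b
      refine Subtype.ext ?_
      show t * (↑a * ↑b) * t⁻¹ = (t * ↑a * t⁻¹) * (t * ↑b * t⁻¹)
      group)
    -- the transfer homomorphism W →* ℤ
    haveI : (N₀.subgroupOf W).FiniteIndex := Subgroup.instFiniteIndex_subgroupOf N₀ W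
    let eW := Subgroup.subgroupOfEquivOfLe hNW
    let ϕ : ↥(N₀.subgroupOf W) →* Multiplicative ℤ := e.toMonoidHom.comp eW.toMonoidHom
    let T : ↥W →* Multiplicative ℤ := MonoidHom.transfer ϕ
    let τ : ↥W → ℤ := fun w => Multiplicative.toAdd (T w)
    have τadd : ∀ u v : ↥W, τ (u * v) = τ u + τ v := by intro u v; simp [τ, map_mul]
    have τinv : ∀ u : ↥W, τ u⁻¹ = - τ u := by intro u; simp [τ, map_inv]
    have τone : τ 1 = 0 := by simp [τ]
    let A : ↥W → ℤ := fun w => τ w - τ (c w)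
    have Aadd : ∀ u v, A (u * v) = A u + A v := by
      intro u v; simp only [A, map_mul, τadd]; ring
    have Aone : A 1 = 0 := by simp only [A, map_one, τone]; ring
    have Ainv : ∀ u, A u⁻¹ = - A u := by
      intro u; simp only [A, map_inv, τinv]; ring
    have ht2W : t * t ∈ W := fact2 t t htW htW
    have hcc : ∀ w : ↥W, c (c w) = ⟨t * t, ht2W⟩ * w * (⟨t * t, ht2W⟩ : ↥W)⁻¹ := by
      intro w
      refine Subtype.ext ?_
      show t * (t * ↑w * t⁻¹) * t⁻¹ = (t * t) * ↑w * (t * t)⁻¹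
      group
    have τcc : ∀ w : ↥W, τ (c (c w)) = τ w := by
      intro w
      rw [hcc, τadd, τadd, τinv]
      ring
    have Ac : ∀ w : ↥W, A (c w) = - A w := by
      intro w
      show τ (c w) - τ (c (c w)) = -(τ w - τ (c w))
      rw [τcc]
      ring
    -- the distinguished elements of W
    have hcg : c ⟨g, hgW⟩ = (⟨g, hgW⟩ : ↥W)⁻¹ := Subtype.ext (by
      show t * g * t⁻¹ = g⁻¹
      exact ht)
    have hkeyW : ∀ (k : ℕ) (w₀ : ↥W),
        w₀⁻¹ * (⟨g, hgW⟩ : ↥W) ^ k * w₀ ∈ N₀.subgroupOf W →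
        w₀⁻¹ * (⟨g, hgW⟩ : ↥W) ^ k * w₀ = (⟨g, hgW⟩ : ↥W) ^ k := by
      intro k w₀ _
      have hcw : Commute (w₀ : V) g := (hmemW _).1 w₀.2
      refine Subtype.ext ?_
      push_cast
      have h6 := (hcw.pow_right k).eq
      rw [mul_assoc, ← h6, inv_mul_cancel_left]
    have hpmem : (⟨g, hgW⟩ : ↥W) ^ (N₀.subgroupOf W).index ∈ N₀.subgroupOf W :=
      MonoidHom.transfer_eq_pow_aux _ hkeyW
    set X : ↥(N₀.subgroupOf W) :=
      ⟨(⟨g, hgW⟩ : ↥W) ^ (N₀.subgroupOf W).index, hpmem⟩ with hX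
    have hTg : T ⟨g, hgW⟩ = ϕ X := MonoidHom.transfer_eq_pow ϕ _ hkeyW
    have hτg : τ ⟨g, hgW⟩ ≠ 0 := by
      intro hcon
      have h7 : T ⟨g, hgW⟩ = 1 := by
        have : Multiplicative.toAdd (T ⟨g, hgW⟩) = 0 := hcon
        exact toAdd_eq_zero.1 this
      rw [hTg] at h7
      have h8 : X = 1 := eW.injective (e.injective (by rw [map_one, map_one]; exact h7))
      have h9 := congrArg (fun z : ↥(N₀.subgroupOf W) => ((z : ↥W) : V)) h8
      simp only [hX] at h9
      push_cast at h9
      exact (Subgroup.instFiniteIndex_subgroupOf N₀ W).index_ne_zero (hgpow _ h9)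
    have hAg : A ⟨g, hgW⟩ ≠ 0 := by
      show τ ⟨g, hgW⟩ - τ (c ⟨g, hgW⟩) ≠ 0
      rw [hcg, τinv]
      omega
    have At2 : A ⟨t * t, ht2W⟩ = 0 := by
      have h11 : c ⟨t * t, ht2W⟩ = ⟨t * t, ht2W⟩ := Subtype.ext (by
        show t * (t * t) * t⁻¹ = t * t
        group)
      show τ ⟨t * t, ht2W⟩ - τ (c ⟨t * t, ht2W⟩) = 0
      rw [h11]
      ring
    -- the subgroup of values of A
    let Sr : AddSubgroup ℤ :=
      { carrier := Set.range A
        zero_mem' := ⟨1, Aone⟩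
        add_mem' := by rintro _ _ ⟨u, rfl⟩ ⟨v, rfl⟩; exact ⟨u * v, Aadd u v⟩
        neg_mem' := by rintro _ ⟨u, rfl⟩; exact ⟨u⁻¹, Ainv u⟩ }
    obtain ⟨b, hSb⟩ := Int.subgroup_cyclic Sr
    have hdvd : ∀ w : ↥W, ∃ k : ℤ, A w = k * b := by
      intro w
      have h12 : A w ∈ Sr := ⟨w, rfl⟩
      rw [hSb, AddSubgroup.mem_closure_singleton] at h12
      obtain ⟨n, hn⟩ := h12
      exact ⟨n, by rw [← hn]; simp [zsmul_eq_mul]⟩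
    have hmul : ∀ k : ℤ, ∃ w : ↥W, A w = k * b := by
      intro k
      have h13 : k * b ∈ Sr := by
        rw [hSb, AddSubgroup.mem_closure_singleton]
        exact ⟨k, by simp [zsmul_eq_mul]⟩
      exact h13
    have hbne : b ≠ 0 := by
      rintro rfl
      obtain ⟨k, hk⟩ := hdvd ⟨g, hgW⟩
      simp only [mul_zero] at hk
      exact hAg hk
    -- the homomorphism to the infinite dihedral group
    obtain ⟨Φ, hΦ⟩ : ∃ Φ : V →* DihedralGroup 0, ∀ v : V,
        Φ v = if h : v ∈ W then r (show ZMod 0 from A ⟨v, h⟩)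
          else sr (show ZMod 0 from -A ⟨v * t⁻¹, hcompl v h⟩) := by
      refine ⟨MonoidHom.mk' (fun v : V =>
        if h : v ∈ W then r (show ZMod 0 from A ⟨v, h⟩)
          else sr (show ZMod 0 from -A ⟨v * t⁻¹, hcompl v h⟩)) ?_, fun v => rfl⟩
      intro u v
      beta_reduce
      by_cases hu : u ∈ W <;> by_cases hv : v ∈ W
      · rw [dif_pos hu, dif_pos hv, dif_pos (mul_mem hu hv), r_mul_r]
        exact congrArg r (show A ⟨u * v, mul_mem hu hv⟩ = A ⟨u, hu⟩ + A ⟨v, hv⟩ by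
          rw [show (⟨u * v, mul_mem hu hv⟩ : ↥W) = ⟨u, hu⟩ * ⟨v, hv⟩ from rfl, Aadd])
      · rw [dif_pos hu, dif_neg hv, dif_neg (fact3 u v hu hv), r_mul_sr]
        refine congrArg sr ?_
        have h14 : (⟨u * v * t⁻¹, hcompl _ (fact3 u v hu hv)⟩ : ↥W) =
            ⟨u, hu⟩ * ⟨v * t⁻¹, hcompl v hv⟩ := Subtype.ext (mul_assoc u v t⁻¹)
        show -A ⟨u * v * t⁻¹, hcompl _ (fact3 u v hu hv)⟩ =
          -A ⟨v * t⁻¹, hcompl v hv⟩ - A ⟨u, hu⟩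
        rw [h14, Aadd]
        ring
      · rw [dif_neg hu, dif_pos hv, dif_neg (fact4 u v hu hv), sr_mul_r]
        refine congrArg sr ?_
        have h14 : (⟨u * v * t⁻¹, hcompl _ (fact4 u v hu hv)⟩ : ↥W) =
            ⟨u * t⁻¹, hcompl u hu⟩ * c ⟨v, hv⟩ := Subtype.ext (by
          show u * v * t⁻¹ = (u * t⁻¹) * (t * v * t⁻¹)
          group)
        show -A ⟨u * v * t⁻¹, hcompl _ (fact4 u v hu hv)⟩ =
          -A ⟨u * t⁻¹, hcompl u hu⟩ + A ⟨v, hv⟩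
        rw [h14, Aadd, Ac]
        ring
      · rw [dif_neg hu, dif_neg hv, dif_pos (fact2 u v hu hv), sr_mul_sr]
        refine congrArg r ?_
        have h14 : (⟨u * v, fact2 u v hu hv⟩ : ↥W) =
            ⟨u * t⁻¹, hcompl u hu⟩ * c ⟨v * t⁻¹, hcompl v hv⟩ * ⟨t * t, ht2W⟩ :=
          Subtype.ext (by
            show u * v = (u * t⁻¹) * (t * (v * t⁻¹) * t⁻¹) * (t * t)
            group)
        show A ⟨u * v, fact2 u v hu hv⟩ =
          -A ⟨v * t⁻¹, hcompl v hv⟩ - -A ⟨u * t⁻¹, hcompl u hu⟩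
        rw [h14, Aadd, Aadd, Ac, At2]
        ring
    -- the range of Φ is the range of multiplication by b on D∞
    have hrange : ∀ v : V, Φ v ∈ (aux_dmul b).range := by
      intro v
      rw [hΦ v]
      by_cases h : v ∈ W
      · rw [dif_pos h]
        obtain ⟨k, hk⟩ := hdvd ⟨v, h⟩
        exact ⟨r k, by
          erw [aux_dmul_r]
          exact congrArg r (show (k * b : ℤ) = A ⟨v, h⟩ from hk.symm)⟩
      · rw [dif_neg h]
        obtain ⟨k, hk⟩ := hdvd ⟨v * t⁻¹, hcompl v h⟩
        exact ⟨sr (-k), by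
          erw [aux_dmul_sr]
          exact congrArg sr (show ((-k) * b : ℤ) = -A ⟨v * t⁻¹, hcompl v h⟩ from by
            rw [hk]; ring)⟩
    let Φ' : V →* ↥(aux_dmul b).range := Φ.codRestrict _ hrange
    have hsurj : Surjective Φ' := by
      rintro ⟨y, d, rfl⟩
      cases d with
      | r i =>
        obtain ⟨w, hw⟩ := hmul (show ℤ from i)
        refine ⟨(w : V), Subtype.ext ?_⟩
        show Φ (w : V) = aux_dmul b (r i)
        rw [hΦ, dif_pos w.2]; erw [aux_dmul_r]
        exact congrArg r (show A ⟨(w : V), w.2⟩ = (show ℤ from i) * b from by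
          rw [Subtype.coe_eta]; exact hw)
      | sr i =>
        obtain ⟨w, hw⟩ := hmul (-(show ℤ from i))
        refine ⟨(w : V) * t, Subtype.ext ?_⟩
        show Φ ((w : V) * t) = aux_dmul b (sr i)
        rw [hΦ, dif_neg (fact3 (w : V) t w.2 htW)]; erw [aux_dmul_sr]
        have hwtt : (⟨(w : V) * t * t⁻¹, hcompl _ (fact3 (w : V) t w.2 htW)⟩ : ↥W) = w :=
          Subtype.ext (by
            show (w : V) * t * t⁻¹ = w
            rw [mul_inv_cancel_right])
        refine congrArg sr ?_
        show -A ⟨(w : V) * t * t⁻¹, hcompl _ (fact3 (w : V) t w.2 htW)⟩ = (show ℤ from i) * b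
        rw [hwtt, hw]
        ring
    have hinjψ : Injective (aux_dmul b) := aux_dmul_inj hbne
    exact ⟨((MonoidHom.ofInjective hinjψ).symm.toMonoidHom).comp Φ',
      ((MonoidHom.ofInjective hinjψ).symm.surjective).comp hsurj⟩
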